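/- Let F be a Set-functor preserving finite intersections, let (C, c) be an F-coalgebra, and let S ⊆ B ⊆ C with S finite. Say there is a transition x → y if c(x) is not in the image of F applied to the inclusion C∖{y} ↪ C. If x has no transition into S, then F χ_S^B (c(x)) = F χ_∅^B (c(x)), where χ_S^B : C → 3 maps elements of S to 2, of B∖S to 1, and of C∖B to 0. -/

import Mathlib

open CategoryTheory

open scoped Classical

private lemma range_mono19 (F : Type ⥤ Type) {X : Type} {A A' : Set X} (h : A ⊆ A') :
    Set.range (F.map (TypeCat.ofHom (fun a : A => (a : X)))) ⊆ Set.range (F.map (TypeCat.ofHom (fun a : A' => (a : X)))) := by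
  rintro _ ⟨w, rfl⟩
  refine ⟨F.map (TypeCat.ofHom (Set.inclusion h)) w, ?_⟩
  rw [← FunctorToTypes.map_comp_apply]
  rfl

private lemma key19 (F : Type ⥤ Type)
    (hF : ∀ (X : Type) (A B : Set X),
      Set.range (F.map (TypeCat.ofHom (fun a : A => (a : X)))) ∩ Set.range (F.map (TypeCat.ofHom (fun b : B => (b : X)))) ⊆
        Set.range (F.map (TypeCat.ofHom (fun p : ↥(A ∩ B) => (p : X)))))
    (C : Type) (u : F.obj C) (T : Finset C)
    (hu : ∀ y ∈ T, u ∈ Set.range (F.map (TypeCat.ofHom (fun z : ↥({y}ᶜ : Set C) => (z : C))))) :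
    u ∈ Set.range (F.map (TypeCat.ofHom (fun z : ↥((↑T : Set C)ᶜ) => (z : C)))) := by
  induction T using Finset.induction_on with
  | empty =>
      refine range_mono19 F (A := Set.univ) (by simp) ?_
      refine ⟨F.map (TypeCat.ofHom (fun x : C => (⟨x, trivial⟩ : (Set.univ : Set C)))) u, ?_⟩
      rw [← FunctorToTypes.map_comp_apply]
      have : (TypeCat.ofHom (fun x : C => (⟨x, trivial⟩ : (Set.univ : Set C))) ≫
          TypeCat.ofHom (fun a : (Set.univ : Set C) => (a : C))) = 𝟙 C := rfl
      rw [this, FunctorToTypes.map_id_apply]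
  | @insert a s ha ih =>
      have h1 : u ∈ Set.range (F.map (TypeCat.ofHom (fun z : ↥({a}ᶜ : Set C) => (z : C)))) :=
        hu a (Finset.mem_insert_self a s)
      have h2 := ih (fun y hy => hu y (Finset.mem_insert_of_mem hy))
      have h3 := hF C ({a}ᶜ) ((↑s : Set C)ᶜ) ⟨h1, h2⟩
      refine range_mono19 F ?_ h3
      intro z hz
      simp only [Set.mem_inter_iff, Set.mem_compl_iff, Set.mem_singleton_iff] at hz
      simp [hz.1, hz.2]

theorem stmt19 (F : Type ⥤ Type)
    -- F preserves finite intersections: the intersection of the images of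
    -- F applied to the subset inclusions A ↪ X and B ↪ X is contained in the
    -- image of F applied to the inclusion A ∩ B ↪ X.
    (hF : ∀ (X : Type) (A B : Set X),
      Set.range (F.map (TypeCat.ofHom (fun a : A => (a : X)))) ∩ Set.range (F.map (TypeCat.ofHom (fun b : B => (b : X)))) ⊆
        Set.range (F.map (TypeCat.ofHom (fun p : ↥(A ∩ B) => (p : X)))))
    (C : Type) (c : C → F.obj C) (S B : Set C) (hSB : S ⊆ B) (hS : S.Finite) (x : C)
    -- x has no transition into S: for every y ∈ S, c x lies in the image of
    -- F applied to the inclusion C∖{y} ↪ C.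
    (hx : ∀ y ∈ S, c x ∈ Set.range (F.map (TypeCat.ofHom (fun z : ↥({y}ᶜ : Set C) => (z : C))))) :
    F.map (TypeCat.ofHom (fun z : C => if z ∈ S then (2 : Fin 3) else if z ∈ B then 1 else 0)) (c x) =
      F.map (TypeCat.ofHom (fun z : C => if z ∈ B then (1 : Fin 3) else 0)) (c x) := by
  have hcov : (↑hS.toFinset : Set C)ᶜ ⊆ Sᶜ := by simp
  have hmem : c x ∈ Set.range (F.map (TypeCat.ofHom (fun z : ↥(Sᶜ) => (z : C)))) := by
    refine range_mono19 F hcov (key19 F hF C (c x) hS.toFinset ?_)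
    intro y hy
    exact hx y (hS.mem_toFinset.mp hy)
  obtain ⟨w, hw⟩ := hmem
  rw [← hw, ← FunctorToTypes.map_comp_apply, ← FunctorToTypes.map_comp_apply]
  have : (TypeCat.ofHom (fun z : ↥(Sᶜ) => (z : C)) ≫
      TypeCat.ofHom (fun z : C => if z ∈ S then (2 : Fin 3) else if z ∈ B then 1 else 0)) =
      (TypeCat.ofHom (fun z : ↥(Sᶜ) => (z : C)) ≫ TypeCat.ofHom (fun z : C => if z ∈ B then (1 : Fin 3) else 0)) := by
    ext z
    obtain ⟨z, hz⟩ := z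
    simp only [Set.mem_compl_iff] at hz
    simp [Function.comp, hz]
  rw [this]
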